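/- Let H = H_R ⊗ H_A ⊗ H_Ã ⊗ H_B ⊗ H_B̃ where H_R = H_A = H_B = ℂ² and H_Ã, H_B̃ are finite-dimensional complex Hilbert spaces, and let β denote the EPR state (|00⟩ + |11⟩)/√2 ∈ ℂ² ⊗ ℂ². Suppose |ψ⁰⟩, |ψ¹⟩ ∈ H are unit vectors, U is a unitary on H_A ⊗ H_Ã (acting as the identity on the other factors), and V is a unitary on H_B ⊗ H_B̃ (acting as the identity on the other factors), such that U|ψ⁰⟩ = β_{RA} ⊗ |P⟩ for some unit vector |P⟩ ∈ H_Ã ⊗ H_B ⊗ H_B̃ (β placed in the R and A registers) and V|ψ¹⟩ = β_{RB} ⊗ |Q⟩ for some unit vector |Q⟩ ∈ H_A ⊗ H_Ã ⊗ H_B̃ (β placed in the R and B registers). Then |⟨ψ⁰|ψ¹⟩| ≤ 1/2. -/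

import Mathlib

/-- The index set of the five-register Hilbert space
`H_R ⊗ H_A ⊗ H_Ã ⊗ H_B ⊗ H_B̃`, where `H_R = H_A = H_B = ℂ²` are qubit
registers and `H_Ã = ℂ^a`, `H_B̃ = ℂ^b` are arbitrary finite-dimensional
registers. -/
abbrev QIdx (a b : ℕ) := Fin 2 × Fin 2 × Fin a × Fin 2 × Fin b

/-- The amplitude of the EPR state `(|00⟩ + |11⟩)/√2` at basis index `(i, j)`. -/
noncomputable def eprAmp (i j : Fin 2) : ℂ :=
  if i = j then ((1 / Real.sqrt 2 : ℝ) : ℂ) else 0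

/-- The action (in coordinates) of a matrix `u` on the registers `A ⊗ Ã`,
extended by the identity on the remaining registers `R`, `B`, `B̃`. -/
noncomputable def applyA {a b : ℕ}
    (u : Matrix (Fin 2 × Fin a) (Fin 2 × Fin a) ℂ)
    (ψ : EuclideanSpace ℂ (QIdx a b)) (v : QIdx a b) : ℂ :=
  ∑ p : Fin 2 × Fin a,
    u (v.2.1, v.2.2.1) p * ψ (v.1, p.1, p.2, v.2.2.2.1, v.2.2.2.2)

/-- The action (in coordinates) of a matrix `u` on the registers `B ⊗ B̃`,
extended by the identity on the remaining registers `R`, `A`, `Ã`. -/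
noncomputable def applyB {a b : ℕ}
    (u : Matrix (Fin 2 × Fin b) (Fin 2 × Fin b) ℂ)
    (ψ : EuclideanSpace ℂ (QIdx a b)) (v : QIdx a b) : ℂ :=
  ∑ p : Fin 2 × Fin b,
    u (v.2.2.2.1, v.2.2.2.2) p * ψ (v.1, v.2.1, v.2.2.1, p.1, p.2)

lemma unitary_sum {n : Type*} [Fintype n] [DecidableEq n]
    (M : Matrix n n ℂ) (hM : M ∈ Matrix.unitaryGroup n ℂ)
    (f g : n → ℂ) :
    ∑ s, (starRingEnd ℂ (∑ p, M s p * f p)) * (∑ q, M s q * g q)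
      = ∑ p, starRingEnd ℂ (f p) * g p := by
  have h1 : star M * M = (1 : Matrix n n ℂ) := hM.1
  have hcol : ∀ p q, (∑ s, starRingEnd ℂ (M s p) * M s q) = if p = q then 1 else 0 := by
    intro p q
    have h2 := congrArg (fun X : Matrix n n ℂ => X p q) h1
    simp only [Matrix.mul_apply, Matrix.star_apply, Matrix.one_apply, RCLike.star_def] at h2
    exact h2
  calc
    ∑ s, (starRingEnd ℂ (∑ p, M s p * f p)) * (∑ q, M s q * g q)
        = ∑ s, ∑ p, ∑ q, (starRingEnd ℂ (M s p) * M s q) * (starRingEnd ℂ (f p) * g q) := by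
          refine Finset.sum_congr rfl fun s _ => ?_
          rw [map_sum, Finset.sum_mul]
          refine Finset.sum_congr rfl fun p _ => ?_
          rw [Finset.mul_sum]
          refine Finset.sum_congr rfl fun q _ => ?_
          rw [map_mul]; ring
    _ = ∑ p, ∑ q, (∑ s, starRingEnd ℂ (M s p) * M s q) * (starRingEnd ℂ (f p) * g q) := by
          rw [Finset.sum_comm]
          refine Finset.sum_congr rfl fun p _ => ?_
          rw [Finset.sum_comm]
          refine Finset.sum_congr rfl fun q _ => ?_
          rw [Finset.sum_mul]
    _ = ∑ p, starRingEnd ℂ (f p) * g p := by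
          refine Finset.sum_congr rfl fun p _ => ?_
          simp [hcol]

def eA (a b : ℕ) : ((Fin 2 × Fin 2 × Fin b) × (Fin 2 × Fin a)) ≃ QIdx a b where
  toFun w := (w.1.1, w.2.1, w.2.2, w.1.2.1, w.1.2.2)
  invFun v := ((v.1, v.2.2.2.1, v.2.2.2.2), (v.2.1, v.2.2.1))
  left_inv _ := rfl
  right_inv _ := rfl

def eB (a b : ℕ) : ((Fin 2 × Fin 2 × Fin a) × (Fin 2 × Fin b)) ≃ QIdx a b where
  toFun w := (w.1.1, w.1.2.1, w.1.2.2, w.2.1, w.2.2)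
  invFun v := ((v.1, v.2.1, v.2.2.1), (v.2.2.2.1, v.2.2.2.2))
  left_inv _ := rfl
  right_inv _ := rfl

lemma sum_applyA {a b : ℕ} (U : Matrix (Fin 2 × Fin a) (Fin 2 × Fin a) ℂ)
    (hU : U ∈ Matrix.unitaryGroup (Fin 2 × Fin a) ℂ)
    (x y : EuclideanSpace ℂ (QIdx a b)) :
    ∑ v : QIdx a b, starRingEnd ℂ (applyA U x v) * applyA U y v
      = ∑ v : QIdx a b, starRingEnd ℂ (x v) * y v := by
  have e1 := Equiv.sum_comp (eA a b) (fun v => starRingEnd ℂ (applyA U x v) * applyA U y v)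
  have e2 := Equiv.sum_comp (eA a b) (fun v => starRingEnd ℂ (x v) * y v)
  rw [← e1, ← e2]
  rw [Fintype.sum_prod_type]
  conv_rhs => rw [Fintype.sum_prod_type]
  refine Finset.sum_congr rfl fun c _ => ?_
  exact unitary_sum U hU (fun p => x (c.1, p.1, p.2, c.2.1, c.2.2))
    (fun p => y (c.1, p.1, p.2, c.2.1, c.2.2))

lemma sum_applyB {a b : ℕ} (V : Matrix (Fin 2 × Fin b) (Fin 2 × Fin b) ℂ)
    (hV : V ∈ Matrix.unitaryGroup (Fin 2 × Fin b) ℂ)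
    (x y : EuclideanSpace ℂ (QIdx a b)) :
    ∑ v : QIdx a b, starRingEnd ℂ (applyB V x v) * applyB V y v
      = ∑ v : QIdx a b, starRingEnd ℂ (x v) * y v := by
  have e1 := Equiv.sum_comp (eB a b) (fun v => starRingEnd ℂ (applyB V x v) * applyB V y v)
  have e2 := Equiv.sum_comp (eB a b) (fun v => starRingEnd ℂ (x v) * y v)
  rw [← e1, ← e2]
  rw [Fintype.sum_prod_type]
  conv_rhs => rw [Fintype.sum_prod_type]
  refine Finset.sum_congr rfl fun c _ => ?_
  exact unitary_sum V hV (fun p => x (c.1, c.2.1, c.2.2, p.1, p.2))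
    (fun p => y (c.1, c.2.1, c.2.2, p.1, p.2))

lemma applyAB_comm {a b : ℕ} (U : Matrix (Fin 2 × Fin a) (Fin 2 × Fin a) ℂ)
    (V : Matrix (Fin 2 × Fin b) (Fin 2 × Fin b) ℂ)
    (ψ : EuclideanSpace ℂ (QIdx a b)) :
    applyB V (WithLp.toLp 2 (applyA U ψ)) = applyA U (WithLp.toLp 2 (applyB V ψ)) := by
  funext v
  simp only [applyA, applyB, PiLp.toLp_apply, Finset.mul_sum]
  rw [Finset.sum_comm]
  exact Finset.sum_congr rfl fun p _ => Finset.sum_congr rfl fun q _ => by ring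

lemma conj_eprAmp (i j : Fin 2) : starRingEnd ℂ (eprAmp i j) = eprAmp i j := by
  unfold eprAmp; split <;> simp

lemma eprAmp_collapse (X : Fin 2 → Fin 2 → ℂ) (r : Fin 2) :
    (∑ A : Fin 2, ∑ B : Fin 2, eprAmp r A * eprAmp r B * X A B) = (1/2 : ℂ) * X r r := by
  have hc : ((1 / Real.sqrt 2 : ℝ) : ℂ) * ((1 / Real.sqrt 2 : ℝ) : ℂ) = (1/2 : ℂ) := by
    rw [← Complex.ofReal_mul, div_mul_div_comm, one_mul, Real.mul_self_sqrt (by norm_num)]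
    norm_num
  simp only [eprAmp, ite_mul, zero_mul, mul_ite, mul_zero, Finset.sum_ite_irrel,
    Finset.sum_const_zero, Finset.sum_ite_eq, Finset.mem_univ, if_true]
  rw [hc]

lemma norm_one_of_inner_one {E : Type*} [NormedAddCommGroup E] [InnerProductSpace ℂ E]
    (X : E) (h : (inner ℂ X X : ℂ) = 1) : ‖X‖ = 1 := by
  have h2 : ((‖X‖ : ℂ))^2 = 1 := (inner_self_eq_norm_sq_to_K (𝕜 := ℂ) X).symm.trans h
  have h3 : ‖X‖^2 = 1 := by exact_mod_cast h2
  calc ‖X‖ = Real.sqrt (‖X‖^2) := (Real.sqrt_sq (norm_nonneg X)).symm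
    _ = 1 := by rw [h3, Real.sqrt_one]

def eX (a b : ℕ) : (Fin a × (Fin 2 × Fin b)) ≃ (Fin 2 × Fin a × Fin b) where
  toFun w := (w.2.1, w.1, w.2.2)
  invFun w := (w.2.1, (w.1, w.2.2))
  left_inv _ := rfl
  right_inv _ := rfl

def eY (a b : ℕ) : (Fin b × (Fin 2 × Fin a)) ≃ (Fin 2 × Fin a × Fin b) where
  toFun w := (w.2.1, w.2.2, w.1)
  invFun w := (w.2.2, (w.1, w.2.1))
  left_inv _ := rfl
  right_inv _ := rfl

lemma normX {a b : ℕ} (V : Matrix (Fin 2 × Fin b) (Fin 2 × Fin b) ℂ)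
    (hV : V ∈ Matrix.unitaryGroup (Fin 2 × Fin b) ℂ)
    (P : EuclideanSpace ℂ (Fin a × Fin 2 × Fin b)) (hP : ‖P‖ = 1)
    (X : EuclideanSpace ℂ (Fin 2 × Fin a × Fin b))
    (hXdef : ∀ w : Fin 2 × Fin a × Fin b,
      X w = ∑ p : Fin 2 × Fin b, V (w.1, w.2.2) p * P (w.2.1, p.1, p.2)) :
    ‖X‖ = 1 := by
  refine norm_one_of_inner_one X ?_
  have hre : (inner ℂ X X : ℂ)
      = ∑ w : Fin 2 × Fin a × Fin b,
        starRingEnd ℂ (∑ p : Fin 2 × Fin b, V (w.1, w.2.2) p * P (w.2.1, p.1, p.2)) *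
        (∑ p : Fin 2 × Fin b, V (w.1, w.2.2) p * P (w.2.1, p.1, p.2)) := by
    simp only [PiLp.inner_apply, RCLike.inner_apply]
    exact Finset.sum_congr rfl fun w _ => by rw [hXdef, mul_comm]
  rw [hre]
  have e1 := Equiv.sum_comp (eX a b) (fun w : Fin 2 × Fin a × Fin b =>
    starRingEnd ℂ (∑ p : Fin 2 × Fin b, V (w.1, w.2.2) p * P (w.2.1, p.1, p.2)) *
    (∑ p : Fin 2 × Fin b, V (w.1, w.2.2) p * P (w.2.1, p.1, p.2)))
  rw [← e1]
  refine (Fintype.sum_prod_type _).trans ?_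
  have step : ∀ ta : Fin a, (∑ s : Fin 2 × Fin b,
      starRingEnd ℂ (∑ p : Fin 2 × Fin b, V s p * P (ta, p.1, p.2)) *
      (∑ p : Fin 2 × Fin b, V s p * P (ta, p.1, p.2)))
      = ∑ p : Fin 2 × Fin b, starRingEnd ℂ (P (ta, p.1, p.2)) * P (ta, p.1, p.2) :=
    fun ta => unitary_sum V hV (fun p => P (ta, p.1, p.2)) (fun p => P (ta, p.1, p.2))
  refine (Finset.sum_congr rfl fun ta _ => step ta).trans ?_
  have hPP : (∑ i : Fin a × Fin 2 × Fin b, starRingEnd ℂ (P i) * P i) = 1 := by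
    have h1 : (inner ℂ P P : ℂ) = ∑ i, starRingEnd ℂ (P i) * P i := by
      simp only [PiLp.inner_apply, RCLike.inner_apply]; exact Finset.sum_congr rfl fun _ _ => mul_comm _ _
    rw [← h1, inner_self_eq_norm_sq_to_K, hP]
    norm_num
  exact (Fintype.sum_prod_type _).symm.trans hPP

lemma normY {a b : ℕ} (U : Matrix (Fin 2 × Fin a) (Fin 2 × Fin a) ℂ)
    (hU : U ∈ Matrix.unitaryGroup (Fin 2 × Fin a) ℂ)
    (Q : EuclideanSpace ℂ (Fin 2 × Fin a × Fin b)) (hQ : ‖Q‖ = 1)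
    (Y : EuclideanSpace ℂ (Fin 2 × Fin a × Fin b))
    (hYdef : ∀ w : Fin 2 × Fin a × Fin b,
      Y w = ∑ p : Fin 2 × Fin a, U (w.1, w.2.1) p * Q (p.1, p.2, w.2.2)) :
    ‖Y‖ = 1 := by
  refine norm_one_of_inner_one Y ?_
  have hre : (inner ℂ Y Y : ℂ)
      = ∑ w : Fin 2 × Fin a × Fin b,
        starRingEnd ℂ (∑ p : Fin 2 × Fin a, U (w.1, w.2.1) p * Q (p.1, p.2, w.2.2)) *
        (∑ p : Fin 2 × Fin a, U (w.1, w.2.1) p * Q (p.1, p.2, w.2.2)) := by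
    simp only [PiLp.inner_apply, RCLike.inner_apply]
    exact Finset.sum_congr rfl fun w _ => by rw [hYdef, mul_comm]
  rw [hre]
  have e1 := Equiv.sum_comp (eY a b) (fun w : Fin 2 × Fin a × Fin b =>
    starRingEnd ℂ (∑ p : Fin 2 × Fin a, U (w.1, w.2.1) p * Q (p.1, p.2, w.2.2)) *
    (∑ p : Fin 2 × Fin a, U (w.1, w.2.1) p * Q (p.1, p.2, w.2.2)))
  rw [← e1]
  refine (Fintype.sum_prod_type _).trans ?_
  have step : ∀ tb : Fin b, (∑ s : Fin 2 × Fin a,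
      starRingEnd ℂ (∑ p : Fin 2 × Fin a, U s p * Q (p.1, p.2, tb)) *
      (∑ p : Fin 2 × Fin a, U s p * Q (p.1, p.2, tb)))
      = ∑ p : Fin 2 × Fin a, starRingEnd ℂ (Q (p.1, p.2, tb)) * Q (p.1, p.2, tb) :=
    fun tb => unitary_sum U hU (fun p => Q (p.1, p.2, tb)) (fun p => Q (p.1, p.2, tb))
  refine (Finset.sum_congr rfl fun tb _ => step tb).trans ?_
  have hQQ : (∑ i : Fin 2 × Fin a × Fin b, starRingEnd ℂ (Q i) * Q i) = 1 := by
    have h1 : (inner ℂ Q Q : ℂ) = ∑ i, starRingEnd ℂ (Q i) * Q i := by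
      simp only [PiLp.inner_apply, RCLike.inner_apply]; exact Finset.sum_congr rfl fun _ _ => mul_comm _ _
    rw [← h1, inner_self_eq_norm_sq_to_K, hQ]
    norm_num
  refine ((Fintype.sum_prod_type (fun j : Fin b × (Fin 2 × Fin a) =>
    starRingEnd ℂ (Q ((eY a b) j)) * Q ((eY a b) j))).symm).trans ?_
  exact (Equiv.sum_comp (eY a b) (fun i => starRingEnd ℂ (Q i) * Q i)).trans hQQ

def eM (a b : ℕ) : ((Fin 2 × Fin a × Fin b) × (Fin 2 × Fin 2)) ≃ QIdx a b where
  toFun w := (w.1.1, w.2.1, w.1.2.1, w.2.2, w.1.2.2)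
  invFun v := ((v.1, v.2.2.1, v.2.2.2.2), (v.2.1, v.2.2.2.1))
  left_inv _ := rfl
  right_inv _ := rfl

/-- If a local unitary `U` on `A ⊗ Ã` maps `ψ⁰` to an EPR pair in registers
`R, A` tensored with a unit vector `P` of `Ã ⊗ B ⊗ B̃`, and a local unitary `V`
on `B ⊗ B̃` maps `ψ¹` to an EPR pair in registers `R, B` tensored with a unit
vector `Q` of `A ⊗ Ã ⊗ B̃`, then `|⟨ψ⁰|ψ¹⟩| ≤ 1/2`. -/
theorem abs_inner_le_half_of_localized (a b : ℕ)
    (ψ0 ψ1 : EuclideanSpace ℂ (QIdx a b))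
    (hψ0 : ‖ψ0‖ = 1) (hψ1 : ‖ψ1‖ = 1)
    (U : Matrix (Fin 2 × Fin a) (Fin 2 × Fin a) ℂ)
    (hU : U ∈ Matrix.unitaryGroup (Fin 2 × Fin a) ℂ)
    (V : Matrix (Fin 2 × Fin b) (Fin 2 × Fin b) ℂ)
    (hV : V ∈ Matrix.unitaryGroup (Fin 2 × Fin b) ℂ)
    (P : EuclideanSpace ℂ (Fin a × Fin 2 × Fin b)) (hP : ‖P‖ = 1)
    (Q : EuclideanSpace ℂ (Fin 2 × Fin a × Fin b)) (hQ : ‖Q‖ = 1)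
    (h0 : ∀ (r A : Fin 2) (ta : Fin a) (B : Fin 2) (tb : Fin b),
      applyA U ψ0 (r, A, ta, B, tb) = eprAmp r A * P (ta, B, tb))
    (h1 : ∀ (r A : Fin 2) (ta : Fin a) (B : Fin 2) (tb : Fin b),
      applyB V ψ1 (r, A, ta, B, tb) = eprAmp r B * Q (A, ta, tb)) :
    ‖(inner ℂ ψ0 ψ1 : ℂ)‖ ≤ 1 / 2 := by
  have hf0 : ∀ (r A : Fin 2) (ta : Fin a) (B : Fin 2) (tb : Fin b),
      applyB V (WithLp.toLp 2 (applyA U ψ0)) (r, A, ta, B, tb)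
        = eprAmp r A * ∑ p : Fin 2 × Fin b, V (B, tb) p * P (ta, p.1, p.2) := by
    intro r A ta B tb
    show (∑ p : Fin 2 × Fin b, V (B, tb) p * applyA U ψ0 (r, A, ta, p.1, p.2)) = _
    rw [Finset.mul_sum]
    refine Finset.sum_congr rfl fun p _ => ?_
    rw [h0 r A ta p.1 p.2]; ring
  have hf1 : ∀ (r A : Fin 2) (ta : Fin a) (B : Fin 2) (tb : Fin b),
      applyB V (WithLp.toLp 2 (applyA U ψ1)) (r, A, ta, B, tb)
        = eprAmp r B * ∑ p : Fin 2 × Fin a, U (A, ta) p * Q (p.1, p.2, tb) := by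
    intro r A ta B tb
    rw [applyAB_comm]
    show (∑ p : Fin 2 × Fin a, U (A, ta) p * applyB V ψ1 (r, p.1, p.2, B, tb)) = _
    rw [Finset.mul_sum]
    refine Finset.sum_congr rfl fun p _ => ?_
    rw [h1 r p.1 p.2 B tb]; ring
  set X : EuclideanSpace ℂ (Fin 2 × Fin a × Fin b) :=
    WithLp.toLp 2 (fun w : Fin 2 × Fin a × Fin b => ∑ p : Fin 2 × Fin b, V (w.1, w.2.2) p * P (w.2.1, p.1, p.2)) with hXdef
  set Y : EuclideanSpace ℂ (Fin 2 × Fin a × Fin b) :=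
    WithLp.toLp 2 (fun w : Fin 2 × Fin a × Fin b => ∑ p : Fin 2 × Fin a, U (w.1, w.2.1) p * Q (p.1, p.2, w.2.2)) with hYdef
  have key : (inner ℂ ψ0 ψ1 : ℂ)
      = (1/2 : ℂ) * ∑ w : Fin 2 × Fin a × Fin b, starRingEnd ℂ (X w) * Y w := by
    have hinner : (inner ℂ ψ0 ψ1 : ℂ) = ∑ v : QIdx a b, starRingEnd ℂ (ψ0 v) * ψ1 v := by
      simp only [PiLp.inner_apply, RCLike.inner_apply]; exact Finset.sum_congr rfl fun _ _ => mul_comm _ _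
    have hB := sum_applyB V hV (WithLp.toLp 2 (applyA U ψ0)) (WithLp.toLp 2 (applyA U ψ1))
    simp only [PiLp.toLp_apply] at hB
    rw [hinner, ← sum_applyA U hU ψ0 ψ1,
      ← hB]
    have e1 := Equiv.sum_comp (eM a b) (fun v : QIdx a b =>
      starRingEnd ℂ (applyB V (WithLp.toLp 2 (applyA U ψ0)) v) * applyB V (WithLp.toLp 2 (applyA U ψ1)) v)
    rw [← e1, Fintype.sum_prod_type, Finset.mul_sum]
    refine Finset.sum_congr rfl fun w _ => ?_
    refine (Fintype.sum_prod_type _).trans ?_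
    have colr := eprAmp_collapse (fun A B =>
      starRingEnd ℂ (X (B, w.2.1, w.2.2)) * Y (A, w.2.1, w.2.2)) w.1
    refine Eq.trans ?_ colr
    refine Finset.sum_congr rfl fun A _ => (Finset.sum_congr rfl fun B _ => ?_)
    rw [show ((eM a b) (w, (A, B))) = (w.1, A, w.2.1, B, w.2.2) from rfl]
    rw [hf0 w.1 A w.2.1 B w.2.2, hf1 w.1 A w.2.1 B w.2.2, map_mul, conj_eprAmp]
    simp only [hXdef, hYdef, PiLp.toLp_apply]
    ring
  have hXn : ‖X‖ = 1 := normX V hV P hP X (fun w => rfl)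
  have hYn : ‖Y‖ = 1 := normY U hU Q hQ Y (fun w => rfl)
  have hS : ‖∑ w : Fin 2 × Fin a × Fin b, starRingEnd ℂ (X w) * Y w‖ ≤ 1 := by
    have hIP : (∑ w : Fin 2 × Fin a × Fin b, starRingEnd ℂ (X w) * Y w)
        = (inner ℂ X Y : ℂ) := by
      simp only [PiLp.inner_apply, RCLike.inner_apply]; exact Finset.sum_congr rfl fun _ _ => mul_comm _ _
    rw [hIP]
    calc ‖(inner ℂ X Y : ℂ)‖ ≤ ‖X‖ * ‖Y‖ := norm_inner_le_norm X Y
      _ = 1 := by rw [hXn, hYn, mul_one]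
  rw [key, norm_mul]
  have h12 : ‖(1/2 : ℂ)‖ = 1/2 := by norm_num
  rw [h12]
  linarith [hS]
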